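/- Let ρ₁, ρ₂ be finite positive Borel measures on the circle Λ, absolutely continuous with respect to Haar measure, with ρ₁(Λ) ≤ ρ₂(Λ). If l, r ∈ Λ are such that l ∉ 𝒥, r ∉ 𝒥, and the open arc (l,r) is contained in 𝒥, then ρ₁([l,r]) = ρ₂([l,r]); that is, the excess of ρ₁ over each connected component of 𝒥 vanishes. -/

import Mathlib

open MeasureTheory Set Filter Topology

noncomputable section

instance fact01 : Fact ((0:ℝ) < 1) := ⟨zero_lt_one⟩

/-- The circle `ℝ/ℤ`. -/
abbrev Circle' : Type := AddCircle (1:ℝ)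

/-- The angular position of `w` in the arc starting at `u`, measured positively;
a real number in `[0,1)`. -/
noncomputable def theta (u w : Circle') : ℝ := ((AddCircle.equivIco 1 0) (w - u) : ℝ)

/-- The closed arc `[u,v]` from `u` to `v` in the positive direction. -/
def arcCC (u v : Circle') : Set Circle' := {w | theta u w ≤ theta u v}

/-- The half-open arc `(u,v]`. -/
def arcOC (u v : Circle') : Set Circle' := {w | 0 < theta u w ∧ theta u w ≤ theta u v}

/-- The half-open arc `[u,v)`. -/
def arcCO (u v : Circle') : Set Circle' := {w | theta u w < theta u v}

/-- The open arc `(u,v)`. -/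
def arcOO (u v : Circle') : Set Circle' := {w | 0 < theta u w ∧ theta u w < theta u v}

/-- The excess `E(u,v) = ρ₁([u,v]) - ρ₂([u,v])`. -/
noncomputable def excess (ρ₁ ρ₂ : Measure Circle') (u v : Circle') : ℝ :=
  (ρ₁ (arcCC u v)).toReal - (ρ₂ (arcCC u v)).toReal

/-- The flux `J(v) = sup_u max (E(u,v)) 0`. -/
noncomputable def flux (ρ₁ ρ₂ : Measure Circle') (v : Circle') : ℝ :=
  ⨆ u : Circle', max (excess ρ₁ ρ₂ u v) 0

/-- The set `𝒥 = {v | ∃ u, E(u,v) > 0}`. -/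
def Jset (ρ₁ ρ₂ : Measure Circle') : Set Circle' := {v | ∃ u : Circle', 0 < excess ρ₁ ρ₂ u v}

namespace St8

set_option linter.unusedSectionVars false


lemma volume_singleton (x : Circle') : (volume : Measure Circle') {x} = 0 := by
  have h := AddCircle.volume_closedBall (T := (1:ℝ)) (x := x) 0
  have h2 : (volume : Measure Circle') {x} ≤ volume (Metric.closedBall x 0) :=
    measure_mono (by simp [Metric.mem_closedBall])
  rw [h] at h2
  simpa using h2

lemma theta_mem (u w : Circle') : theta u w ∈ Ico (0:ℝ) 1 := by
  have := ((AddCircle.equivIco 1 0) (w - u)).2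
  simpa [theta] using this

lemma coe_theta (u w : Circle') : ((theta u w : ℝ) : Circle') = w - u := by
  have := (AddCircle.equivIco (1:ℝ) 0).symm_apply_apply (w - u)
  simpa [theta, AddCircle.equivIco, QuotientAddGroup.equivIcoMod] using this

lemma equivIco_coe (t : ℝ) (h : t ∈ Ico (0:ℝ) 1) :
    ((AddCircle.equivIco (1:ℝ) 0) (↑t) : ℝ) = t := by
  rw [show (AddCircle.equivIco (1:ℝ) 0) = QuotientAddGroup.equivIcoMod zero_lt_one 0 from rfl,
    QuotientAddGroup.equivIcoMod_coe]
  exact (toIcoMod_eq_self zero_lt_one).2 (by simpa using h)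

lemma theta_coe (u : Circle') (t : ℝ) (h : t ∈ Ico (0:ℝ) 1) : theta u (u + ↑t) = t := by
  simp [theta, add_sub_cancel_left, equivIco_coe t h]

lemma measurable_theta (u : Circle') : Measurable (theta u) := by
  have h1 : Measurable fun w : Circle' => ((AddCircle.equivIco (1:ℝ) 0) w : ℝ) :=
    measurable_subtype_coe.comp (AddCircle.measurableEquivIco 1 0).measurable
  exact h1.comp (measurable_id.sub_const u)

lemma theta_self (u : Circle') : theta u u = 0 := by
  have := theta_coe u 0 (by simp)
  simpa using this

lemma theta_eq_iff (u w : Circle') (t : ℝ) (h : t ∈ Ico (0:ℝ) 1) :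
    theta u w = t ↔ w = u + ↑t := by
  constructor
  · intro he
    have := coe_theta u w
    rw [he] at this
    rw [this]; abel
  · rintro rfl; exact theta_coe u t h

lemma coe_sub_coe (x y : ℝ) : ((x : Circle') - (y : Circle')) = ((x - y : ℝ) : Circle') := by
  norm_cast

lemma theta_rel (l u w : Circle') :
    theta u w = if theta l u ≤ theta l w then theta l w - theta l u
      else theta l w - theta l u + 1 := by
  have hu := theta_mem l u
  have hw := theta_mem l w
  have hcoe : w = u + ↑(theta l w - theta l u) := by
    have h1 := coe_theta l u
    have h2 := coe_theta l w
    rw [← coe_sub_coe, h1, h2]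
    abel
  split_ifs with hc
  · have h2 := theta_coe u (theta l w - theta l u)
      ⟨by linarith [hu.1, hw.1], by linarith [hu.1, hw.2]⟩
    rw [← hcoe] at h2
    exact h2
  · push_neg at hc
    have hper : ((theta l w - theta l u : ℝ) : Circle')
        = ((theta l w - theta l u + 1 : ℝ) : Circle') :=
      (AddCircle.coe_add_period 1 _).symm
    have h2 := theta_coe u (theta l w - theta l u + 1)
      ⟨by linarith [hw.1, hu.2], by linarith [hc, hu.1, hw.2]⟩
    rw [← hper, ← hcoe] at h2
    exact h2

lemma arcCC_eq_of_le (l u v : Circle') (h : theta l u ≤ theta l v) :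
    arcCC u v = {w | theta l u ≤ theta l w ∧ theta l w ≤ theta l v} := by
  ext w
  have hu := theta_mem l u
  have hv := theta_mem l v
  have hw := theta_mem l w
  simp only [arcCC, mem_setOf_eq, theta_rel l u w, theta_rel l u v, if_pos h]
  split_ifs with hc
  · constructor
    · intro h'; exact ⟨hc, by linarith⟩
    · intro h'; linarith [h'.2]
  · push_neg at hc
    constructor
    · intro h'; linarith [hv.2, hw.1]
    · intro h'; linarith [h'.1]

lemma arcCC_eq_of_gt (l u v : Circle') (h : theta l v < theta l u) :
    arcCC u v = {w | theta l w ≤ theta l v ∨ theta l u ≤ theta l w} := by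
  ext w
  have hu := theta_mem l u
  have hv := theta_mem l v
  have hw := theta_mem l w
  simp only [arcCC, mem_setOf_eq, theta_rel l u w, theta_rel l u v, if_neg (not_le.2 h)]
  split_ifs with hc
  · constructor
    · intro h'; right; exact hc
    · intro h'; linarith [hv.1, hw.2]
  · push_neg at hc
    constructor
    · intro h'; left; linarith
    · intro h'
      rcases h' with h' | h'
      · linarith
      · linarith


def Sle (l : Circle') (t : ℝ) : Set Circle' := {w | theta l w ≤ t}
def Sge (l : Circle') (t : ℝ) : Set Circle' := {w | t ≤ theta l w}
def Sioc (l : Circle') (a b : ℝ) : Set Circle' := {w | a < theta l w ∧ theta l w ≤ b}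

lemma measurableSet_Sle (l : Circle') (t : ℝ) : MeasurableSet (Sle l t) :=
  measurableSet_le (measurable_theta l) measurable_const

lemma measurableSet_Sge (l : Circle') (t : ℝ) : MeasurableSet (Sge l t) :=
  measurableSet_le measurable_const (measurable_theta l)

lemma measurableSet_Sioc (l : Circle') (a b : ℝ) : MeasurableSet (Sioc l a b) := by
  have : Sioc l a b = {w | a < theta l w} ∩ {w | theta l w ≤ b} := rfl
  rw [this]
  exact (measurableSet_lt measurable_const (measurable_theta l)).inter
    (measurableSet_le (measurable_theta l) measurable_const)

noncomputable def GG (ρ : Measure Circle') (l : Circle') (t : ℝ) : ℝ := (ρ (Sle l t)).toReal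

variable (ρ : Measure Circle') [IsFiniteMeasure ρ]

lemma GG_split (l : Circle') {b c : ℝ} (h : b ≤ c) :
    GG ρ l c = GG ρ l b + (ρ (Sioc l b c)).toReal := by
  have hd : Disjoint (Sle l b) (Sioc l b c) := by
    rw [Set.disjoint_left]
    intro w hw hw2
    exact absurd hw (not_le.2 hw2.1)
  have hu : Sle l c = Sle l b ∪ Sioc l b c := by
    ext w
    simp only [Sle, Sioc, mem_setOf_eq, mem_union]
    constructor
    · intro h'
      by_cases hb : theta l w ≤ b
      exacts [Or.inl hb, Or.inr ⟨not_le.1 hb, h'⟩]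
    · rintro (h' | h')
      exacts [h'.trans h, h'.2]
  rw [GG, hu, measure_union hd (measurableSet_Sioc l b c),
    ENNReal.toReal_add (measure_ne_top _ _) (measure_ne_top _ _)]
  rfl

lemma GG_mono (l : Circle') : Monotone (GG ρ l) := fun b c h => by
  rw [GG_split ρ l h]
  exact le_add_of_nonneg_right ENNReal.toReal_nonneg

variable {ρ}

lemma theta_fiber_null (hac : ρ ≪ (volume : Measure Circle')) (l : Circle') {t : ℝ}
    (ht : t ∈ Ico (0:ℝ) 1) : ρ {w | theta l w = t} = 0 := by
  have he : {w | theta l w = t} = {l + (t : ℝ)} := by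
    ext w
    simpa using theta_eq_iff l w t ht
  rw [he]
  exact hac (volume_singleton _)

lemma GG_zero (hac : ρ ≪ (volume : Measure Circle')) (l : Circle') : GG ρ l 0 = 0 := by
  have he : Sle l 0 = {w | theta l w = 0} := by
    ext w
    simp only [Sle, mem_setOf_eq]
    constructor
    · intro h; exact le_antisymm h (theta_mem l w).1
    · intro h; exact h.le
  rw [GG, he, theta_fiber_null hac l (by simp)]
  simp

lemma measure_Sicc (hac : ρ ≪ (volume : Measure Circle')) (l : Circle') {t s : ℝ}
    (ht : t ∈ Ico (0:ℝ) 1) (hts : t ≤ s) :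
    (ρ {w | t ≤ theta l w ∧ theta l w ≤ s}).toReal = GG ρ l s - GG ρ l t := by
  have he : {w | t ≤ theta l w ∧ theta l w ≤ s} = {w | theta l w = t} ∪ Sioc l t s := by
    ext w
    simp only [Sioc, mem_setOf_eq, mem_union]
    constructor
    · rintro ⟨h1, h2⟩
      rcases eq_or_lt_of_le h1 with h | h
      exacts [Or.inl h.symm, Or.inr ⟨h, h2⟩]
    · rintro (h | h)
      exacts [⟨h.ge, h.le.trans hts⟩, ⟨h.1.le, h.2⟩]
  have hz := theta_fiber_null hac l ht
  have hm : ρ ({w | theta l w = t} ∪ Sioc l t s) = ρ (Sioc l t s) :=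
    le_antisymm ((measure_union_le _ _).trans_eq (by rw [hz, zero_add]))
      (measure_mono subset_union_right)
  rw [he, hm, GG_split ρ l hts]
  ring

lemma GG_continuousAt (hac : ρ ≪ (volume : Measure Circle')) (l : Circle') {a : ℝ}
    (ha : a ∈ Ico (0:ℝ) 1) : ContinuousAt (GG ρ l) a := by
  set D : ℕ → Set Circle' := fun n => {w | a - 1/(n+1) ≤ theta l w ∧ theta l w ≤ a + 1/(n+1)}
    with hD
  have hDmeas : ∀ n, MeasurableSet (D n) := by
    intro n
    exact (measurableSet_le measurable_const (measurable_theta l)).inter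
      (measurableSet_le (measurable_theta l) measurable_const)
  have hDanti : Antitone D := by
    intro m n hmn w hw
    have h1 : (1:ℝ)/(n+1) ≤ 1/(m+1) := by
      apply one_div_le_one_div_of_le
      · positivity
      · exact_mod_cast by omega
    exact ⟨by linarith [hw.1], by linarith [hw.2]⟩
  have hInter : ⋂ n, D n = {w | theta l w = a} := by
    ext w
    simp only [hD, mem_iInter, mem_setOf_eq]
    constructor
    · intro h
      by_contra hne
      rcases lt_or_gt_of_ne hne with hlt | hgt
      · obtain ⟨n, hn⟩ := exists_nat_one_div_lt (show (0:ℝ) < a - theta l w by linarith)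
        have := (h n).1
        linarith
      · obtain ⟨n, hn⟩ := exists_nat_one_div_lt (show (0:ℝ) < theta l w - a by linarith)
        have := (h n).2
        linarith
    · intro h n
      have hp : (0:ℝ) < 1/((n:ℝ)+1) := by positivity
      rw [h]
      exact ⟨by linarith, by linarith⟩
  have hlim : Tendsto (fun n => ρ (D n)) atTop (𝓝 (ρ {w | theta l w = a})) := by
    have := tendsto_measure_iInter_atTop (μ := ρ) (s := D)
      (fun n => (hDmeas n).nullMeasurableSet) hDanti ⟨0, measure_ne_top _ _⟩
    rwa [hInter] at this
  rw [theta_fiber_null hac l ha] at hlim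
  have hlim' : Tendsto (fun n => (ρ (D n)).toReal) atTop (𝓝 0) := by
    have := (ENNReal.tendsto_toReal (by simp : (0:ENNReal) ≠ ⊤)).comp hlim
    simpa [Function.comp_def] using this
  rw [Metric.continuousAt_iff]
  intro ε hε
  obtain ⟨n, hn⟩ := (hlim'.eventually (gt_mem_nhds hε)).exists
  refine ⟨1/(n+1), by positivity, ?_⟩
  intro x hx
  rw [Real.dist_eq] at hx
  rw [Real.dist_eq]
  have key : ∀ b c : ℝ, b ≤ c → a - 1/(n+1) ≤ b → c ≤ a + 1/(n+1) →
      GG ρ l c - GG ρ l b < ε := by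
    intro b c hbc hb hc
    rw [GG_split ρ l hbc]
    have hsub : Sioc l b c ⊆ D n := by
      intro w hw
      exact ⟨by linarith [hw.1], by linarith [hw.2]⟩
    have : (ρ (Sioc l b c)).toReal ≤ (ρ (D n)).toReal :=
      ENNReal.toReal_mono (measure_ne_top _ _) (measure_mono hsub)
    linarith
  rcases le_total a x with hax | hax
  · have h1 : GG ρ l a ≤ GG ρ l x := GG_mono ρ l hax
    have h2 := key a x hax (by linarith [show (0:ℝ) < 1/(n+1) by positivity]) (by
      rw [abs_sub_lt_iff] at hx
      linarith [hx.1])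
    rw [abs_lt]
    constructor <;> linarith
  · have h1 : GG ρ l x ≤ GG ρ l a := GG_mono ρ l hax
    have h2 := key x a hax (by
      rw [abs_sub_lt_iff] at hx
      linarith [hx.2]) (by linarith [show (0:ℝ) < 1/(n+1) by positivity])
    rw [abs_lt]
    constructor <;> linarith


/-- Measure of the "wrap" set `{θ ≤ s} ∪ {t ≤ θ}` as a sum, `s < t`. -/
lemma measure_wrap (ρ : Measure Circle') [IsFiniteMeasure ρ] (l : Circle') {s t : ℝ}
    (hst : s < t) :
    (ρ {w | theta l w ≤ s ∨ t ≤ theta l w}).toReal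
      = (ρ (Sle l s)).toReal + (ρ (Sge l t)).toReal := by
  have he : {w | theta l w ≤ s ∨ t ≤ theta l w} = Sle l s ∪ Sge l t := rfl
  have hd : Disjoint (Sle l s) (Sge l t) := by
    rw [Set.disjoint_left]
    intro w hw hw2
    exact absurd (le_trans hw2 hw) (not_le.2 hst)
  rw [he, measure_union hd (measurableSet_Sge l t),
    ENNReal.toReal_add (measure_ne_top _ _) (measure_ne_top _ _)]

/-- `{θ ≤ 0} ∪ A` has the same measure as `A` for AC measures. -/
lemma measure_zero_union (ρ : Measure Circle') [IsFiniteMeasure ρ] (hac : ρ ≪ (volume : Measure Circle'))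
    (l : Circle') (A : Set Circle') :
    ρ ({w | theta l w ≤ (0:ℝ)} ∪ A) = ρ A := by
  have hz : ρ {w | theta l w ≤ (0:ℝ)} = 0 := by
    have he : {w | theta l w ≤ (0:ℝ)} = {w | theta l w = 0} := by
      ext w
      exact ⟨fun h => le_antisymm h (theta_mem l w).1, fun h => h.le⟩
    rw [he]
    exact theta_fiber_null hac l (by simp)
  exact le_antisymm ((measure_union_le _ _).trans_eq (by rw [hz, zero_add]))
    (measure_mono subset_union_right)


end St8

open St8

/-- for absolutely continuous `ρ₁, ρ₂`, the excess vanishes over each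
connected component of `𝒥`: if `l, r ∉ 𝒥` and the open arc `(l,r)` is contained in
`𝒥`, then `ρ₁([l,r]) = ρ₂([l,r])`. -/
theorem stmt8 (ρ₁ ρ₂ : Measure Circle') [IsFiniteMeasure ρ₁] [IsFiniteMeasure ρ₂]
    (hac₁ : ρ₁ ≪ (volume : Measure Circle')) (hac₂ : ρ₂ ≪ (volume : Measure Circle'))
    (hmass : ρ₁ Set.univ ≤ ρ₂ Set.univ)
    (l r : Circle') (hl : l ∉ Jset ρ₁ ρ₂) (hr : r ∉ Jset ρ₁ ρ₂)
    (hsub : arcOO l r ⊆ Jset ρ₁ ρ₂) :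
    ρ₁ (arcCC l r) = ρ₂ (arcCC l r) := by
  have hl' : ∀ u, excess ρ₁ ρ₂ u l ≤ 0 := fun u => not_lt.1 fun h => hl ⟨u, h⟩
  have hr' : ∀ u, excess ρ₁ ρ₂ u r ≤ 0 := fun u => not_lt.1 fun h => hr ⟨u, h⟩
  set T := theta l r with hT
  have hT01 : T ∈ Ico (0:ℝ) 1 := theta_mem l r
  have harc : arcCC l r = Sle l T := rfl
  rcases eq_or_lt_of_le hT01.1 with hT0 | hT0
  · -- degenerate case T = 0
    have he : arcCC l r = {w | theta l w = 0} := by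
      ext w
      constructor
      · intro h
        exact le_antisymm (le_of_le_of_eq h hT0.symm) (theta_mem l w).1
      · intro h
        show theta l w ≤ T
        rw [h, ← hT0]
    rw [he, theta_fiber_null hac₁ l (by simp), theta_fiber_null hac₂ l (by simp)]
  · -- main case 0 < T
    set f : ℝ → ℝ := fun t => GG ρ₁ l t - GG ρ₂ l t with hf
    have hf0 : f 0 = 0 := by
      simp only [hf, GG_zero hac₁ l, GG_zero hac₂ l, sub_zero]
    -- excess from l equals f
    have hfT : f T ≤ 0 := by
      have h := hr' l
      simpa only [excess, harc, hf, GG] using h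
    -- statement (F2): tails have nonpositive excess
    have hge : ∀ t ∈ Ioo (0:ℝ) 1, (ρ₁ (Sge l t)).toReal - (ρ₂ (Sge l t)).toReal ≤ 0 := by
      intro t ht
      set u := l + (t : ℝ) with hu
      have hut : theta l u = t := theta_coe l t ⟨ht.1.le, ht.2⟩
      have harcu : arcCC u l = {w | theta l w ≤ (0:ℝ)} ∪ Sge l t := by
        have h := arcCC_eq_of_gt l u l (by rw [hut, theta_self]; exact ht.1)
        rw [h, theta_self, hut]
        rfl
      have hm1 : ρ₁ (arcCC u l) = ρ₁ (Sge l t) := by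
        rw [harcu]; exact measure_zero_union ρ₁ hac₁ l _
      have hm2 : ρ₂ (arcCC u l) = ρ₂ (Sge l t) := by
        rw [harcu]; exact measure_zero_union ρ₂ hac₂ l _
      have h := hl' u
      simpa only [excess, hm1, hm2] using h
    -- statement (F3): strictly smaller earlier value
    have key : ∀ s ∈ Ioo (0:ℝ) T, ∃ t, t ∈ Ico (0:ℝ) s ∧ f t < f s := by
      intro s hs
      have hs01 : s ∈ Ico (0:ℝ) 1 := ⟨hs.1.le, hs.2.trans hT01.2⟩
      set v := l + (s : ℝ) with hv
      have hvs : theta l v = s := theta_coe l s hs01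
      have hvJ : v ∈ Jset ρ₁ ρ₂ := by
        apply hsub
        show 0 < theta l v ∧ theta l v < theta l r
        rw [hvs]
        exact ⟨hs.1, hs.2⟩
      obtain ⟨u, hu⟩ := hvJ
      set t := theta l u with htdef
      have ht01 : t ∈ Ico (0:ℝ) 1 := theta_mem l u
      rcases le_or_gt t s with hts | hst
      · -- case t ≤ s
        have harcu : arcCC u v = {w | t ≤ theta l w ∧ theta l w ≤ s} := by
          rw [arcCC_eq_of_le l u v (by rw [hvs]; exact hts), hvs]
        have he : excess ρ₁ ρ₂ u v = (f s - f t) := by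
          simp only [excess, harcu, measure_Sicc hac₁ l ht01 hts,
            measure_Sicc hac₂ l ht01 hts, hf]
          ring
        rw [he] at hu
        have htne : t ≠ s := by
          intro h
          rw [h] at hu
          simp at hu
        exact ⟨t, ⟨ht01.1, lt_of_le_of_ne hts htne⟩, by linarith⟩
      · -- case s < t : wrap-around, use hge
        have harcu : arcCC u v = {w | theta l w ≤ s ∨ t ≤ theta l w} := by
          rw [arcCC_eq_of_gt l u v (by rw [hvs]; exact hst), hvs]
        have he : excess ρ₁ ρ₂ u v
            = f s + ((ρ₁ (Sge l t)).toReal - (ρ₂ (Sge l t)).toReal) := by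
          simp only [excess, harcu, measure_wrap ρ₁ l hst, measure_wrap ρ₂ l hst, hf, GG]
          ring
        rw [he] at hu
        have h2 := hge t ⟨hs.1.trans hst, ht01.2⟩
        exact ⟨0, ⟨le_refl 0, hs.1⟩, by rw [hf0]; linarith⟩
    -- continuity
    have hcont : ∀ a ∈ Ico (0:ℝ) 1, ContinuousAt f a := fun a ha =>
      (GG_continuousAt hac₁ l ha).sub (GG_continuousAt hac₂ l ha)
    -- (F5): f nonnegative on [0, T)
    have hnn : ∀ t ∈ Ico (0:ℝ) T, 0 ≤ f t := by
      intro t₀ ht₀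
      by_contra hneg
      push_neg at hneg
      have hKco : ContinuousOn f (Icc 0 t₀) := fun y hy =>
        (hcont y ⟨hy.1, lt_of_le_of_lt hy.2 (ht₀.2.trans hT01.2)⟩).continuousWithinAt
      obtain ⟨x, hxK, hxmin⟩ :=
        (isCompact_Icc : IsCompact (Icc (0:ℝ) t₀)).exists_isMinOn
          (nonempty_Icc.2 ht₀.1) hKco
      have hfx : f x ≤ f t₀ := hxmin (right_mem_Icc.2 ht₀.1)
      have hx0 : x ≠ 0 := by
        intro h
        rw [h, hf0] at hfx
        linarith
      have hxIoo : x ∈ Ioo (0:ℝ) T :=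
        ⟨lt_of_le_of_ne hxK.1 (Ne.symm hx0), lt_of_le_of_lt hxK.2 ht₀.2⟩
      obtain ⟨t, htmem, hlt⟩ := key x hxIoo
      have hge' : f x ≤ f t := hxmin ⟨htmem.1, htmem.2.le.trans hxK.2⟩
      linarith
    -- (F6): limit from the left gives f T ≥ 0
    have hfT' : 0 ≤ f T := by
      have hTc : Tendsto f (𝓝[<] T) (𝓝 (f T)) :=
        ((hcont T hT01).tendsto).mono_left nhdsWithin_le_nhds
      have hev : ∀ᶠ t in 𝓝[<] T, 0 ≤ f t := by
        filter_upwards [Ioo_mem_nhdsLT hT0]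
          with t ht
        exact hnn t ⟨ht.1.le, ht.2⟩
      exact ge_of_tendsto hTc hev
    -- conclude
    have hfeq : f T = 0 := le_antisymm hfT hfT'
    have htoReal : (ρ₁ (Sle l T)).toReal = (ρ₂ (Sle l T)).toReal := by
      have : GG ρ₁ l T = GG ρ₂ l T := by
        have := hfeq
        simp only [hf] at this
        linarith
      simpa [GG] using this
    rw [harc]
    exact (ENNReal.toReal_eq_toReal_iff' (measure_ne_top _ _) (measure_ne_top _ _)).1 htoReal

end
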